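/- For every natural number n ≥ 1, there exists a finite partially ordered set P with exactly n antichains and with at most (⌊log₂ n⌋ + 1)² elements. -/

import Mathlib

open Sum

section Aux

variable {α β : Type*}

/-- Antichains of a disjoint-union order correspond to pairs of antichains. -/
def sumAntichainEquiv (α β : Type*) [PartialOrder α] [PartialOrder β] :
    {A : Set (α ⊕ β) // IsAntichain (· ≤ ·) A} ≃
      {A : Set α // IsAntichain (· ≤ ·) A} × {B : Set β // IsAntichain (· ≤ ·) B} where
  toFun A :=
    (⟨Sum.inl ⁻¹' A.1, fun a ha b hb hne hle =>
        A.2 ha hb (fun h => hne (Sum.inl.inj h)) (Sum.inl_le_inl_iff.2 hle)⟩,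
     ⟨Sum.inr ⁻¹' A.1, fun a ha b hb hne hle =>
        A.2 ha hb (fun h => hne (Sum.inr.inj h)) (Sum.inr_le_inr_iff.2 hle)⟩)
  invFun p := ⟨Sum.inl '' p.1.1 ∪ Sum.inr '' p.2.1, by
    rintro x (⟨a, ha, rfl⟩ | ⟨a, ha, rfl⟩) y (⟨b, hb, rfl⟩ | ⟨b, hb, rfl⟩) hne hle
    · exact p.1.2 ha hb (fun h => hne (by rw [h])) (Sum.inl_le_inl_iff.1 hle)
    · exact Sum.not_inl_le_inr hle
    · exact Sum.not_inr_le_inl hle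
    · exact p.2.2 ha hb (fun h => hne (by rw [h])) (Sum.inr_le_inr_iff.1 hle)⟩
  left_inv A := by
    apply Subtype.ext
    ext x
    cases x <;> simp
  right_inv p := by
    apply Prod.ext <;> apply Subtype.ext <;>
      simp [Set.preimage_union, Set.preimage_image_eq _ Sum.inl_injective,
        Set.preimage_image_eq _ Sum.inr_injective]

open Classical in
/-- Antichains of `WithTop α` are the antichains of `α` plus the antichain `{⊤}`. -/
noncomputable def topAntichainEquiv (α : Type*) [PartialOrder α] :
    {A : Set (WithTop α) // IsAntichain (· ≤ ·) A} ≃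
      Option {A : Set α // IsAntichain (· ≤ ·) A} where
  toFun A :=
    if h : (⊤ : WithTop α) ∈ A.1 then none
    else some ⟨(fun a : α => (a : WithTop α)) ⁻¹' A.1, fun a ha b hb hne hle =>
      A.2 ha hb (fun hc => hne (WithTop.coe_injective hc)) (WithTop.coe_le_coe.2 hle)⟩
  invFun o :=
    o.elim ⟨{⊤}, Set.subsingleton_singleton.isAntichain _⟩
      (fun B => ⟨(fun a : α => (a : WithTop α)) '' B.1, by
        rintro x ⟨a, ha, rfl⟩ y ⟨b, hb, rfl⟩ hne hle
        exact B.2 ha hb (fun h => hne (by rw [h])) (WithTop.coe_le_coe.1 hle)⟩)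
  left_inv A := by
    by_cases h : (⊤ : WithTop α) ∈ A.1
    · simp only [dif_pos h, Option.elim]
      apply Subtype.ext
      ext x
      simp only [Option.elim, Set.mem_singleton_iff]
      constructor
      · rintro rfl; exact h
      · intro hx
        by_contra hne
        exact A.2 hx h hne le_top
    · simp only [dif_neg h, Option.elim]
      apply Subtype.ext
      apply Set.image_preimage_eq_of_subset
      intro x hx
      rcases x with _ | a
      · exact absurd hx h
      · exact ⟨a, rfl⟩
  right_inv o := by
    rcases o with _ | B
    · simp [Option.elim]
    · have hT : (⊤ : WithTop α) ∉ (fun a : α => (a : WithTop α)) '' B.1 := by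
        rintro ⟨a, _, ha⟩
        exact WithTop.coe_ne_top ha
      simp only [Option.elim, hT, ↓reduceDIte]
      congr 1
      apply Subtype.ext
      exact Set.preimage_image_eq _ WithTop.coe_injective

lemma ncard_antichains_sum (α β : Type*) [Fintype α] [PartialOrder α] [Fintype β]
    [PartialOrder β] :
    Set.ncard {A : Set (α ⊕ β) | IsAntichain (· ≤ ·) A} =
      Set.ncard {A : Set α | IsAntichain (· ≤ ·) A} *
        Set.ncard {B : Set β | IsAntichain (· ≤ ·) B} := by
  rw [← Nat.card_coe_set_eq, ← Nat.card_coe_set_eq, ← Nat.card_coe_set_eq,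
    ← Nat.card_prod]
  exact Nat.card_congr (sumAntichainEquiv α β)

lemma ncard_antichains_top (α : Type*) [Fintype α] [PartialOrder α] :
    Set.ncard {A : Set (WithTop α) | IsAntichain (· ≤ ·) A} =
      Set.ncard {A : Set α | IsAntichain (· ≤ ·) A} + 1 := by
  rw [← Nat.card_coe_set_eq, ← Nat.card_coe_set_eq, ← Finite.card_option]
  exact Nat.card_congr (topAntichainEquiv α)

lemma ncard_antichains_punit :
    Set.ncard {A : Set PUnit | IsAntichain (· ≤ ·) A} = 2 := by
  have h : {A : Set PUnit | IsAntichain (· ≤ ·) A} = {∅, {PUnit.unit}} := by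
    ext A
    simp only [Set.mem_setOf_eq, Set.mem_insert_iff, Set.mem_singleton_iff]
    constructor
    · intro _
      by_cases h : PUnit.unit ∈ A
      · right; ext ⟨⟩; simp [h]
      · left; ext ⟨⟩; simp [h]
    · rintro (rfl | rfl)
      · exact Set.pairwise_empty _
      · exact Set.subsingleton_singleton.isAntichain _
  rw [h, Set.ncard_pair]
  simp only [ne_eq]
  intro h
  have : PUnit.unit ∈ (∅ : Set PUnit) := h ▸ rfl
  exact this

noncomputable def fintypeWithTop (α : Type) [Fintype α] : Fintype (WithTop α) :=
  Fintype.ofEquiv (Option α) (Equiv.refl _)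

lemma key : ∀ n : ℕ, 1 ≤ n →
    ∃ (P : Type) (_ : Fintype P) (_ : PartialOrder P),
      Set.ncard {A : Set P | IsAntichain (· ≤ ·) A} = n ∧
      Fintype.card P ≤ (Nat.log 2 n + 1) ^ 2 := by
  intro n
  induction n using Nat.strong_induction_on with
  | _ n ih =>
    intro hn
    rcases eq_or_lt_of_le hn with h1 | h2
    · -- n = 1 : take the empty poset
      refine ⟨Fin 0, inferInstance, inferInstance, ?_, ?_⟩
      · have h : {A : Set (Fin 0) | IsAntichain (· ≤ ·) A} = {∅} := by
          ext A
          simp only [Set.mem_setOf_eq, Set.mem_singleton_iff]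
          constructor
          · intro _; exact Set.eq_empty_of_isEmpty A
          · rintro rfl; exact Set.pairwise_empty _
        rw [h, Set.ncard_singleton, ← h1]
      · simp
    · -- n ≥ 2
      have hn2 : 2 ≤ n := h2
      set m := n / 2 with hm
      have hm1 : 1 ≤ m := Nat.one_le_div_iff (by norm_num) |>.2 hn2
      have hmn : m < n := Nat.div_lt_self (by omega) (by norm_num)
      obtain ⟨P, iF, iO, hcount, hcard⟩ := ih m hmn hm1
      have hlog : Nat.log 2 n = Nat.log 2 m + 1 := by
        have h1 := Nat.log_div_base 2 n
        have h2 := Nat.log_pos (show 1 < 2 by norm_num) hn2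
        rw [← hm] at h1
        omega
      rcases Nat.even_or_odd n with he | ho
      · -- n even : double
        have hne : n = 2 * m := by
          obtain ⟨k, hk⟩ := he; omega
        refine ⟨P ⊕ PUnit, inferInstance, inferInstance, ?_, ?_⟩
        · rw [ncard_antichains_sum, hcount, ncard_antichains_punit]
          omega
        · rw [Fintype.card_sum, Fintype.card_punit, hlog]
          nlinarith [hcard]
      · -- n odd : double and add a top
        have hno : n = 2 * m + 1 := by
          obtain ⟨k, hk⟩ := ho; omega
        refine ⟨WithTop (P ⊕ PUnit), fintypeWithTop _, inferInstance, ?_, ?_⟩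
        · rw [ncard_antichains_top, ncard_antichains_sum, hcount, ncard_antichains_punit]
          omega
        · rw [show @Fintype.card (WithTop (P ⊕ PUnit.{1})) (fintypeWithTop _) = Fintype.card (P ⊕ PUnit.{1}) + 1 by
              rw [← Fintype.card_option]; exact @Fintype.card_congr _ _ (fintypeWithTop _) _ (Equiv.refl _), Fintype.card_sum,
            Fintype.card_punit, hlog]
          nlinarith [hcard]

end Aux

/-- For every natural number `n ≥ 1`, there exists a finite poset `P` with exactly `n`
antichains and with at most `(⌊log₂ n⌋ + 1)²` elements. -/
theorem exists_small_poset_with_n_antichains (n : ℕ) (hn : 1 ≤ n) :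
    ∃ (P : Type) (_ : Fintype P) (_ : PartialOrder P),
      Set.ncard {A : Set P | IsAntichain (· ≤ ·) A} = n ∧
      Fintype.card P ≤ (Nat.log 2 n + 1) ^ 2 := by
  exact key n hn
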